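/- Let ψ_a, ψ_b ∈ [0, 1] and let ε, ε_a, ε_b be mutually independent unit-Fréchet random variables, i.e. P(ε ≤ x) = exp(−1/x) for x > 0. Define Z_a = max(ψ_a·ε, (1 − ψ_a)·ε_a) and Z_b = max(ψ_b·ε, (1 − ψ_b)·ε_b). Then lim_{t→∞} t · P(Z_a > t and Z_b > t) = min(ψ_a, ψ_b). -/

import Mathlib

open MeasureTheory ProbabilityTheory Filter

lemma scaled_cdf_aux {Ω : Type*} [MeasurableSpace Ω] (μ : Measure Ω) [IsProbabilityMeasure μ]
    (X : Ω → ℝ)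
    (hF : ∀ x : ℝ, 0 < x → μ {ω | X ω ≤ x} = ENNReal.ofReal (Real.exp (-1 / x)))
    (c t : ℝ) (hc : 0 ≤ c) (ht : 0 < t) :
    μ {ω | c * X ω ≤ t} = ENNReal.ofReal (Real.exp (-(c / t))) := by
  rcases eq_or_lt_of_le hc with h0 | h0
  · have hs : {ω | c * X ω ≤ t} = Set.univ := by
      ext ω; simp [← h0, ht.le]
    rw [hs, measure_univ, ← h0]
    norm_num
  · have hdiv : 0 < t / c := div_pos ht h0
    have hs : {ω | c * X ω ≤ t} = {ω | X ω ≤ t / c} := by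
      ext ω; simp only [Set.mem_setOf_eq, le_div_iff₀ h0, mul_comm]
    rw [hs, hF _ hdiv]
    congr 1
    rw [neg_div, one_div_div]

/-- Limit computation: `t * (1 - 2 e^{-1/t} + e^{-(2-m)/t}) → m`. -/
lemma limit_aux (m : ℝ) :
    Tendsto (fun t : ℝ => t * (1 - 2 * Real.exp (-(1 / t)) + Real.exp (-((2 - m) / t))))
      atTop (nhds m) := by
  set h : ℝ → ℝ := fun u => 1 - 2 * Real.exp (-u) + Real.exp (-((2 - m) * u)) with hh
  have hd : HasDerivAt h m 0 := by
    have h1 : HasDerivAt (fun u : ℝ => Real.exp (-u)) (Real.exp (-(0:ℝ)) * (-1)) 0 :=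
      ((hasDerivAt_id (0:ℝ)).neg).exp
    have h2 : HasDerivAt (fun u : ℝ => Real.exp (-((2 - m) * u)))
        (Real.exp (-((2 - m) * (0:ℝ))) * (-((2 - m) * 1))) 0 :=
      (((hasDerivAt_id (0:ℝ)).const_mul (2 - m)).neg).exp
    have := ((hasDerivAt_const (0:ℝ) (1:ℝ)).sub (h1.const_mul 2)).add h2
    have e : (0 - 2 * (Real.exp (-0) * -1) + Real.exp (-((2 - m) * 0)) * -((2 - m) * 1) : ℝ) = m := by
      norm_num
    rw [e] at this
    exact this
  have hslope : Tendsto (slope h 0) (nhdsWithin 0 {x | x ≠ 0}) (nhds m) :=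
    hasDerivAt_iff_tendsto_slope.mp hd
  have hinv : Tendsto (fun t : ℝ => 1 / t) atTop (nhdsWithin 0 {x | x ≠ 0}) := by
    have := tendsto_inv_atTop_nhdsGT_zero (𝕜 := ℝ)
    refine (this.mono_right (nhdsWithin_mono 0 ?_)).congr (by simp [one_div])
    exact fun x hx => ne_of_gt hx
  have hcomp := hslope.comp hinv
  refine hcomp.congr' ?_
  filter_upwards [eventually_gt_atTop (0:ℝ)] with t ht
  have ht' : (1:ℝ)/t ≠ 0 := by positivity
  simp only [Function.comp_apply, slope_def_field, hh]
  have h0 : (1:ℝ) - 2 * Real.exp (-0) + Real.exp (-((2 - m) * 0)) = 0 := by norm_num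
  rw [h0, sub_zero, sub_zero, mul_one_div, div_div_eq_mul_div, div_one, mul_comm]

theorem asymmetric_logistic_tail_dependence
    {Ω : Type*} [MeasurableSpace Ω] (μ : Measure Ω) [IsProbabilityMeasure μ]
    (ψa ψb : ℝ) (hψa : ψa ∈ Set.Icc (0 : ℝ) 1) (hψb : ψb ∈ Set.Icc (0 : ℝ) 1)
    (ε εa εb : Ω → ℝ)
    (hmeas : Measurable ε) (hmeasa : Measurable εa) (hmeasb : Measurable εb)
    (hFr : ∀ x : ℝ, 0 < x → μ {ω | ε ω ≤ x} = ENNReal.ofReal (Real.exp (-1 / x)))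
    (hFr0 : μ {ω | ε ω ≤ 0} = 0)
    (hFra : ∀ x : ℝ, 0 < x → μ {ω | εa ω ≤ x} = ENNReal.ofReal (Real.exp (-1 / x)))
    (hFra0 : μ {ω | εa ω ≤ 0} = 0)
    (hFrb : ∀ x : ℝ, 0 < x → μ {ω | εb ω ≤ x} = ENNReal.ofReal (Real.exp (-1 / x)))
    (hFrb0 : μ {ω | εb ω ≤ 0} = 0)
    (hind : iIndepFun ![ε, εa, εb] μ) :
    Tendsto (fun t : ℝ => t *
        (μ {ω | t < max (ψa * ε ω) ((1 - ψa) * εa ω) ∧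
                t < max (ψb * ε ω) ((1 - ψb) * εb ω)}).toReal)
      atTop (nhds (min ψa ψb)) := by
  obtain ⟨ha0, ha1⟩ := hψa
  obtain ⟨hb0, hb1⟩ := hψb
  have hsmeas : ∀ c u : ℝ, MeasurableSet {x : ℝ | c * x ≤ u} := fun c u =>
    measurableSet_le (measurable_const.mul measurable_id) measurable_const
  have hMm : max ψa ψb + min ψa ψb = ψa + ψb := max_add_min ψa ψb
  have hM0 : 0 ≤ max ψa ψb := le_trans ha0 (le_max_left _ _)
  refine (limit_aux (min ψa ψb)).congr' ?_
  filter_upwards [eventually_gt_atTop (0:ℝ)] with t ht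
  set A : Set Ω := ε ⁻¹' {x | ψa * x ≤ t} ∩ εa ⁻¹' {x | (1 - ψa) * x ≤ t} with hA
  set B : Set Ω := ε ⁻¹' {x | ψb * x ≤ t} ∩ εb ⁻¹' {x | (1 - ψb) * x ≤ t} with hB
  have hAmeas : MeasurableSet A := (hmeas (hsmeas _ _)).inter (hmeasa (hsmeas _ _))
  have hBmeas : MeasurableSet B := (hmeas (hsmeas _ _)).inter (hmeasb (hsmeas _ _))
  have hE : {ω | t < max (ψa * ε ω) ((1 - ψa) * εa ω) ∧
                t < max (ψb * ε ω) ((1 - ψb) * εb ω)} = (A ∪ B)ᶜ := by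
    ext ω
    simp only [Set.mem_setOf_eq, Set.mem_compl_iff, Set.mem_union, hA, hB, lt_max_iff,
      Set.mem_inter_iff, Set.mem_preimage, not_or, not_and_or, not_le]
  -- pairwise independence values
  have iea : IndepFun ε εa μ := by
    have := hind.indepFun (show (0:Fin 3) ≠ 1 by decide)
    simpa using this
  have ieb : IndepFun ε εb μ := by
    have := hind.indepFun (show (0:Fin 3) ≠ 2 by decide)
    simpa using this
  have cdf_e : ∀ c : ℝ, 0 ≤ c → μ (ε ⁻¹' {x | c * x ≤ t}) = ENNReal.ofReal (Real.exp (-(c / t))) :=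
    fun c hc => scaled_cdf_aux μ ε hFr c t hc ht
  have cdf_a : μ (εa ⁻¹' {x | (1 - ψa) * x ≤ t}) = ENNReal.ofReal (Real.exp (-((1 - ψa) / t))) :=
    scaled_cdf_aux μ εa hFra (1 - ψa) t (by linarith) ht
  have cdf_b : μ (εb ⁻¹' {x | (1 - ψb) * x ≤ t}) = ENNReal.ofReal (Real.exp (-((1 - ψb) / t))) :=
    scaled_cdf_aux μ εb hFrb (1 - ψb) t (by linarith) ht
  have hμA : (μ A).toReal = Real.exp (-(1 / t)) := by
    rw [hA, iea.measure_inter_preimage_eq_mul _ _ (hsmeas _ _) (hsmeas _ _),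
      cdf_e ψa ha0, cdf_a, ← ENNReal.ofReal_mul (Real.exp_nonneg _), ← Real.exp_add]
    rw [ENNReal.toReal_ofReal (Real.exp_nonneg _)]
    congr 1
    field_simp
    ring
  have hμB : (μ B).toReal = Real.exp (-(1 / t)) := by
    rw [hB, ieb.measure_inter_preimage_eq_mul _ _ (hsmeas _ _) (hsmeas _ _),
      cdf_e ψb hb0, cdf_b, ← ENNReal.ofReal_mul (Real.exp_nonneg _), ← Real.exp_add]
    rw [ENNReal.toReal_ofReal (Real.exp_nonneg _)]
    congr 1
    field_simp
    ring
  -- intersection via triple independence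
  have hABset : A ∩ B = ε ⁻¹' {x | max ψa ψb * x ≤ t} ∩ (εa ⁻¹' {x | (1 - ψa) * x ≤ t}
      ∩ εb ⁻¹' {x | (1 - ψb) * x ≤ t}) := by
    have hmaxiff : ∀ x : ℝ, (ψa * x ≤ t ∧ ψb * x ≤ t) ↔ max ψa ψb * x ≤ t := by
      intro x
      constructor
      · rintro ⟨h1, h2⟩
        rcases max_choice ψa ψb with h | h <;> rw [h] <;> assumption
      · intro hMx
        rcases le_or_gt 0 x with hx | hx
        · exact ⟨le_trans (mul_le_mul_of_nonneg_right (le_max_left _ _) hx) hMx,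
            le_trans (mul_le_mul_of_nonneg_right (le_max_right _ _) hx) hMx⟩
        · constructor <;> nlinarith
    ext ω
    simp only [hA, hB, Set.mem_inter_iff, Set.mem_preimage, Set.mem_setOf_eq, ← hmaxiff (ε ω)]
    tauto
  have hμAB : (μ (A ∩ B)).toReal = Real.exp (-((2 - min ψa ψb) / t)) := by
    have key := hind.measure_inter_preimage_eq_mul (S := Finset.univ)
      (sets := ![{x | max ψa ψb * x ≤ t}, {x | (1 - ψa) * x ≤ t}, {x | (1 - ψb) * x ≤ t}])
      (fun i _ => by fin_cases i <;> simpa using hsmeas _ _)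
    have hset : (⋂ i ∈ Finset.univ, ![ε, εa, εb] i ⁻¹'
        (![{x | max ψa ψb * x ≤ t}, {x | (1 - ψa) * x ≤ t}, {x | (1 - ψb) * x ≤ t}] i))
        = A ∩ B := by
      rw [hABset]
      ext ω
      simp [Fin.forall_fin_succ, Set.mem_iInter, and_assoc]
    rw [hset] at key
    rw [key, Fin.prod_univ_three]
    simp only [Matrix.cons_val_zero, Matrix.cons_val_one, Matrix.head_cons,
      Matrix.cons_val_two, Matrix.tail_cons]
    rw [cdf_e _ hM0, cdf_a, cdf_b, ← ENNReal.ofReal_mul (Real.exp_nonneg _),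
      ← Real.exp_add, ← ENNReal.ofReal_mul (Real.exp_nonneg _), ← Real.exp_add]
    rw [ENNReal.toReal_ofReal (Real.exp_nonneg _)]
    congr 1
    field_simp
    linear_combination (-1) * hMm
  -- assemble
  have hfin : ∀ s : Set Ω, μ s ≠ ⊤ := fun s => measure_ne_top μ s
  have hUI := measure_union_add_inter (μ := μ) A hBmeas
  have hUIr : (μ (A ∪ B)).toReal + (μ (A ∩ B)).toReal = (μ A).toReal + (μ B).toReal := by
    rw [← ENNReal.toReal_add (hfin _) (hfin _), ← ENNReal.toReal_add (hfin _) (hfin _), hUI]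
  have hcompl : (μ ((A ∪ B)ᶜ)).toReal = 1 - (μ (A ∪ B)).toReal := by
    rw [measure_compl (hAmeas.union hBmeas) (hfin _), measure_univ,
      ENNReal.toReal_sub_of_le prob_le_one ENNReal.one_ne_top, ENNReal.toReal_one]
  rw [hE, hcompl]
  rw [hμA, hμB, hμAB] at hUIr
  have hval : (μ (A ∪ B)).toReal
      = 2 * Real.exp (-(1 / t)) - Real.exp (-((2 - min ψa ψb) / t)) := by linarith
  rw [hval]
  ring
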